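/- For the model knot complexes C₁ and C₂: Υ²_{C₁, 1}(s) = −2 for all s ∈ [0,2], while Υ²_{C₂, 1}(s) = −2 + s for s ∈ [0,1] and Υ²_{C₂, 1}(s) = −s for s ∈ [1,2]. In particular Υ_{C₁} = Υ_{C₂} but Υ²_{C₁,1} ≠ Υ²_{C₂,1}. -/

import Mathlib

open scoped BigOperators

/-- A "pre-complex": a finite distinguished basis `B`, a grading `gr`,
bifiltration functions `alg` and `alex`, and a differential recorded by its
matrix `d` over the field `F₂ = ZMod 2`:  `∂ x = ∑ y, d x y • y`. -/
structure PreComplex where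
  B : Type
  fB : Fintype B
  dB : DecidableEq B
  gr : B → ℤ
  alg : B → ℤ
  alex : B → ℤ
  d : B → B → ZMod 2

attribute [instance] PreComplex.fB PreComplex.dB

namespace PreComplex

variable (C : PreComplex)

/-- Chains: F₂-linear combinations of basis elements. -/
abbrev Chain : Type := C.B → ZMod 2

/-- The boundary of a chain, extending `∂ x = ∑ y, d x y • y` linearly. -/
def bdry (c : C.Chain) : C.Chain := fun y => ∑ x, c x * C.d x y

/-- A chain is homogeneous of grading `k`. -/
def isGraded (c : C.Chain) (k : ℤ) : Prop := ∀ x, c x ≠ 0 → C.gr x = k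

def isCycle (c : C.Chain) : Prop := C.bdry c = 0

def isBoundary (c : C.Chain) : Prop := ∃ w : C.Chain, C.bdry w = c

/-- A cycle of grading 0 representing the nonzero class of `H₀(C)`. -/
def GenCycle (z : C.Chain) : Prop :=
  C.isCycle z ∧ C.isGraded z 0 ∧ ¬ C.isBoundary z

/-- The bifiltration level of a basis element. -/
def lev (x : C.B) : ℤ × ℤ := (C.alg x, C.alex x)

/-- A model knot complex: `∂ ∘ ∂ = 0`; `∂` drops the grading by one and does
not increase either filtration; the homology is one dimensional, concentrated
in grading 0; and the minimum over cycles representing the generator of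
`H₀(C)` of their maximal `alg` (resp. `alex`) filtration level is 0. -/
def IsModel : Prop :=
  (∀ x z, (∑ y, C.d x y * C.d y z) = 0) ∧
  (∀ x y, C.d x y ≠ 0 → C.gr y = C.gr x - 1 ∧ C.alg y ≤ C.alg x ∧ C.alex y ≤ C.alex x) ∧
  (∀ k : ℤ, k ≠ 0 → ∀ z : C.Chain, C.isCycle z → C.isGraded z k → C.isBoundary z) ∧
  (∃ z : C.Chain, C.GenCycle z) ∧
  (∀ z z' : C.Chain, C.GenCycle z → C.GenCycle z' → C.isBoundary (z + z')) ∧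
  (∃ z : C.Chain, C.GenCycle z ∧ ∀ x, z x ≠ 0 → C.alg x ≤ 0) ∧
  (∀ z : C.Chain, C.GenCycle z → ∃ x, z x ≠ 0 ∧ 0 ≤ C.alg x) ∧
  (∃ z : C.Chain, C.GenCycle z ∧ ∀ x, z x ≠ 0 → C.alex x ≤ 0) ∧
  (∀ z : C.Chain, C.GenCycle z → ∃ x, z x ≠ 0 ∧ 0 ≤ C.alex x)

/-- An acyclic complex: conditions (i) and (ii) hold but the homology vanishes. -/
def IsAcyclic : Prop :=
  (∀ x z, (∑ y, C.d x y * C.d y z) = 0) ∧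
  (∀ x y, C.d x y ≠ 0 → C.gr y = C.gr x - 1 ∧ C.alg y ≤ C.alg x ∧ C.alex y ≤ C.alex x) ∧
  (∀ z : C.Chain, C.isCycle z → C.isBoundary z)

end PreComplex

/-- `f_t(i,j) = (t/2)·j + (1 − t/2)·i`. -/
noncomputable def fval (t : ℝ) (p : ℤ × ℤ) : ℝ :=
  (t / 2) * (p.2 : ℝ) + (1 - t / 2) * (p.1 : ℝ)

namespace PreComplex

variable (C : PreComplex)

/-- A chain lies in the subcomplex `F_{t,s}`. -/
def inF (t s : ℝ) (c : C.Chain) : Prop :=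
  ∀ x, c x ≠ 0 → fval t (C.lev x) ≤ s

/-- `γ_C(t)`: the minimal `s` such that `H₀(F_{t,s}) → H₀(C)` is surjective,
i.e. such that `F_{t,s}` contains a cycle representing the generator. -/
noncomputable def gamma (t : ℝ) : ℝ :=
  sInf {s : ℝ | ∃ z : C.Chain, C.GenCycle z ∧ C.inF t s z}

/-- The Upsilon invariant `Υ_C(t) = −2 γ_C(t)`. -/
noncomputable def Upsilon (t : ℝ) : ℝ := -2 * C.gamma t

/-- `P`: the set of bifiltration levels of basis elements. -/
def PSet : Set (ℤ × ℤ) := Set.range C.lev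

/-- `P_u = { p ∈ P : f_u(p) = γ_C(u) }`. -/
def Pt (u : ℝ) : Set (ℤ × ℤ) := {p ∈ C.PSet | fval u p = C.gamma u}

/-- `p` is the negative pivot point of `C` at `t`. -/
def IsNegPivot (t : ℝ) (p : ℤ × ℤ) : Prop :=
  ∃ δ₀ > (0 : ℝ), ∀ δ : ℝ, 0 < δ → δ < δ₀ → C.Pt (t - δ) ∩ C.Pt t = {p}

/-- `p` is the positive pivot point of `C` at `t`. -/
def IsPosPivot (t : ℝ) (p : ℤ × ℤ) : Prop :=
  ∃ δ₀ > (0 : ℝ), ∀ δ : ℝ, 0 < δ → δ < δ₀ → C.Pt (t + δ) ∩ C.Pt t = {p}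

/-- Cycles in `F_{t−δ, γ_C(t−δ)}` representing the nonzero class of `H₀(C)`. -/
def ZminusAt (t δ : ℝ) : Set C.Chain :=
  {z | C.GenCycle z ∧ C.inF (t - δ) (C.gamma (t - δ)) z}

/-- Cycles in `F_{t+δ, γ_C(t+δ)}` representing the nonzero class of `H₀(C)`. -/
def ZplusAt (t δ : ℝ) : Set C.Chain :=
  {z | C.GenCycle z ∧ C.inF (t + δ) (C.gamma (t + δ)) z}

/-- `Z⁻`: the (eventual, for all sufficiently small `δ > 0`) set of cycles in
`F_{t−δ, γ_C(t−δ)}` representing the nonzero class of `H₀(C)`. -/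
def Zminus (t : ℝ) : Set C.Chain :=
  {z | ∃ δ₀ > (0 : ℝ), ∀ δ : ℝ, 0 < δ → δ < δ₀ → z ∈ C.ZminusAt t δ}

/-- `Z⁺`: the (eventual, for all sufficiently small `δ > 0`) set of cycles in
`F_{t+δ, γ_C(t+δ)}` representing the nonzero class of `H₀(C)`. -/
def Zplus (t : ℝ) : Set C.Chain :=
  {z | ∃ δ₀ > (0 : ℝ), ∀ δ : ℝ, 0 < δ → δ < δ₀ → z ∈ C.ZplusAt t δ}

/-- A basis element lies in the subcomplex `F_{t,γ_C(t)} + F_{s,r}`. -/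
def inRegion (t s r : ℝ) (x : C.B) : Prop :=
  fval t (C.lev x) ≤ C.gamma t ∨ fval s (C.lev x) ≤ r

/-- `z` and `z'` represent the same homology class in `H₀(F_{t,γ_C(t)} + F_{s,r})`
(over F₂ the difference `z − z'` is `z + z'`). -/
def sameClass (t s r : ℝ) (z z' : C.Chain) : Prop :=
  (∀ x, z x ≠ 0 → C.inRegion t s r x) ∧
  (∀ x, z' x ≠ 0 → C.inRegion t s r x) ∧
  ∃ w : C.Chain, (∀ x, w x ≠ 0 → C.inRegion t s r x) ∧ C.bdry w = z + z'

/-- The set of `r` for which some `z⁻ ∈ Z⁻` and `z⁺ ∈ Z⁺` represent the same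
class in `H₀(F_{t,γ_C(t)} + F_{s,r})`. -/
def gamma2Set (t s : ℝ) : Set ℝ :=
  {r | ∃ zm ∈ C.Zminus t, ∃ zp ∈ C.Zplus t, C.sameClass t s r zm zp}

/-- `γ²_{C,t}(s)`, as an extended real: the minimum of `gamma2Set`
(`−∞` if the condition holds for every `r`). -/
noncomputable def gamma2 (t s : ℝ) : EReal :=
  sInf ((fun r : ℝ => (r : EReal)) '' C.gamma2Set t s)

/-- `Υ²_{C,t}(s) = −2 (γ²_{C,t}(s) − γ_C(t))`. -/
noncomputable def Upsilon2 (t s : ℝ) : EReal :=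
  (-2 : EReal) * (C.gamma2 t s - (C.gamma t : EReal))

end PreComplex

/-- The jump of the derivative of `f` at `t`: the right-hand derivative minus
the left-hand derivative. -/
noncomputable def derivJump (f : ℝ → ℝ) (t : ℝ) : ℝ :=
  derivWithin f (Set.Ici t) t - derivWithin f (Set.Iic t) t

/-- Direct sum of two pre-complexes. -/
def PreComplex.dsum (C A : PreComplex) : PreComplex where
  B := C.B ⊕ A.B
  fB := inferInstance
  dB := inferInstance
  gr := Sum.elim C.gr A.gr
  alg := Sum.elim C.alg A.alg
  alex := Sum.elim C.alex A.alex
  d := fun x y =>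
    match x, y with
    | Sum.inl x, Sum.inl y => C.d x y
    | Sum.inr x, Sum.inr y => A.d x y
    | _, _ => 0

/-- Tensor product of two pre-complexes. -/
def PreComplex.tensor (C₁ C₂ : PreComplex) : PreComplex where
  B := C₁.B × C₂.B
  fB := inferInstance
  dB := inferInstance
  gr := fun x => C₁.gr x.1 + C₂.gr x.2
  alg := fun x => C₁.alg x.1 + C₂.alg x.2
  alex := fun x => C₁.alex x.1 + C₂.alex x.2
  d := fun x y =>
    (if x.2 = y.2 then C₁.d x.1 y.1 else 0) + (if x.1 = y.1 then C₂.d x.2 y.2 else 0)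

/-- An isomorphism of pre-complexes: a bijection of the distinguished bases
preserving `gr`, `alg`, `alex`, whose linear extension commutes with the
differentials. -/
def PreComplex.Iso (C₁ C₂ : PreComplex) : Prop :=
  ∃ e : C₁.B ≃ C₂.B,
    (∀ x, C₂.gr (e x) = C₁.gr x) ∧
    (∀ x, C₂.alg (e x) = C₁.alg x) ∧
    (∀ x, C₂.alex (e x) = C₁.alex x) ∧
    (∀ x y, C₂.d (e x) (e y) = C₁.d x y)

/-- Stable equivalence of pre-complexes: isomorphism after adding acyclic
summands. -/
def PreComplex.StablyEquiv (C₁ C₂ : PreComplex) : Prop :=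
  ∃ A₁ A₂ : PreComplex, A₁.IsAcyclic ∧ A₂.IsAcyclic ∧ (C₁.dsum A₁).Iso (C₂.dsum A₂)

/-- The model complex `C₁` (for `T(4,5) # −T(2,3;2,5)`, modulo acyclics):
grading-0 generators `A₁, A₂` at levels (0,2), (2,0) and a grading-1
generator `B` at level (2,2) with `∂B = A₁ + A₂`. -/
def Cone : PreComplex where
  B := Fin 3
  fB := inferInstance
  dB := inferInstance
  gr := ![0, 0, 1]
  alg := ![0, 2, 2]
  alex := ![2, 0, 2]
  d := fun x y => if x.val = 2 ∧ (y.val = 0 ∨ y.val = 1) then 1 else 0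

/-- The model complex `C₂` (for `T(2,5)`): grading-0 generators `a₁,a₂,a₃`
at levels (0,2), (1,1), (2,0) and grading-1 generators `b₁,b₂` at levels
(1,2), (2,1), with `∂b₁ = a₁ + a₂`, `∂b₂ = a₂ + a₃`. -/
def Ctwo : PreComplex where
  B := Fin 5
  fB := inferInstance
  dB := inferInstance
  gr := ![0, 0, 0, 1, 1]
  alg := ![0, 1, 2, 1, 2]
  alex := ![2, 1, 0, 2, 1]
  d := fun x y =>
    if (x.val = 3 ∧ (y.val = 0 ∨ y.val = 1)) ∨ (x.val = 4 ∧ (y.val = 1 ∨ y.val = 2))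
    then 1 else 0

def c3 (i : Fin 3) : Cone.B := i
def c5 (i : Fin 5) : Ctwo.B := i
lemma fval02 (t : ℝ) : fval t (0,2) = t := by simp [fval]
lemma fval20 (t : ℝ) : fval t (2,0) = 2 - t := by simp [fval]; ring
lemma fval22 (t : ℝ) : fval t (2,2) = 2 := by simp [fval]; ring
lemma fval11 (t : ℝ) : fval t (1,1) = 1 := by simp [fval]
lemma fval12 (t : ℝ) : fval t (1,2) = 1 + t/2 := by simp [fval]; ring
lemma fval21 (t : ℝ) : fval t (2,1) = 2 - t/2 := by simp [fval]; ring

example : Cone.lev (0 : Fin 3) = (0,2) := rfl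
example : Cone.lev (1 : Fin 3) = (2,0) := rfl
example : Cone.lev (2 : Fin 3) = (2,2) := rfl
example : Ctwo.lev (0 : Fin 5) = (0,2) := rfl
example : Ctwo.lev (1 : Fin 5) = (1,1) := rfl
example : Ctwo.lev (2 : Fin 5) = (2,0) := rfl
example : Ctwo.lev (3 : Fin 5) = (1,2) := rfl
example : Ctwo.lev (4 : Fin 5) = (2,1) := rfl
open PreComplex in
lemma cone_gen (z : Cone.Chain) : Cone.GenCycle z ↔ z = ![1,0,0] ∨ z = ![0,1,0] := by
  revert z
  unfold PreComplex.GenCycle PreComplex.isCycle PreComplex.isGraded PreComplex.isBoundary PreComplex.bdry Cone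
  decide

lemma ctwo_gen (z : Ctwo.Chain) : Ctwo.GenCycle z ↔ z = ![1,0,0,0,0] ∨ z = ![0,1,0,0,0] ∨ z = ![0,0,1,0,0] ∨ z = ![1,1,1,0,0] := by
  revert z
  unfold PreComplex.GenCycle PreComplex.isCycle PreComplex.isGraded PreComplex.isBoundary PreComplex.bdry Ctwo
  decide
lemma cone_gamma (t : ℝ) : Cone.gamma t = min t (2-t) := by
  have hset : {s : ℝ | ∃ z : Cone.Chain, Cone.GenCycle z ∧ Cone.inF t s z}
      = Set.Ici (min t (2-t)) := by
    ext s
    simp only [Set.mem_setOf_eq, Set.mem_Ici]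
    constructor
    · rintro ⟨z, hz, hf⟩
      rcases (cone_gen z).1 hz with rfl | rfl
      · have h := hf (c3 0) (by decide)
        rw [show Cone.lev (c3 0) = (0,2) from rfl, fval02] at h
        exact (min_le_left _ _).trans h
      · have h := hf (c3 1) (by decide)
        rw [show Cone.lev (c3 1) = (2,0) from rfl, fval20] at h
        exact (min_le_right _ _).trans h
    · intro hs
      rcases le_total t (2-t) with h | h
      · refine ⟨![1,0,0], (cone_gen _).2 (Or.inl rfl), fun x hx => ?_⟩
        have hx0 : x = c3 0 := (by decide : ∀ y : Fin 3, (![1,0,0] : Fin 3 → ZMod 2) y ≠ 0 → y = 0) x hx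
        subst hx0
        rw [show Cone.lev (c3 0) = (0,2) from rfl, fval02]
        exact le_trans (le_of_eq (min_eq_left h).symm) hs
      · refine ⟨![0,1,0], (cone_gen _).2 (Or.inr rfl), fun x hx => ?_⟩
        have hx0 : x = c3 1 := (by decide : ∀ y : Fin 3, (![0,1,0] : Fin 3 → ZMod 2) y ≠ 0 → y = 1) x hx
        subst hx0
        rw [show Cone.lev (c3 1) = (2,0) from rfl, fval20]
        exact le_trans (le_of_eq (min_eq_right h).symm) hs
  unfold PreComplex.gamma
  rw [hset, csInf_Ici]

lemma ctwo_gamma (t : ℝ) : Ctwo.gamma t = min t (min 1 (2-t)) := by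
  have hset : {s : ℝ | ∃ z : Ctwo.Chain, Ctwo.GenCycle z ∧ Ctwo.inF t s z}
      = Set.Ici (min t (min 1 (2-t))) := by
    ext s
    simp only [Set.mem_setOf_eq, Set.mem_Ici]
    constructor
    · rintro ⟨z, hz, hf⟩
      rcases (ctwo_gen z).1 hz with rfl | rfl | rfl | rfl
      · have h := hf (c5 0) (by decide)
        rw [show Ctwo.lev (c5 0) = (0,2) from rfl, fval02] at h
        exact (min_le_left _ _).trans h
      · have h := hf (c5 1) (by decide)
        rw [show Ctwo.lev (c5 1) = (1,1) from rfl, fval11] at h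
        exact le_trans (le_trans (min_le_right _ _) (min_le_left _ _)) h
      · have h := hf (c5 2) (by decide)
        rw [show Ctwo.lev (c5 2) = (2,0) from rfl, fval20] at h
        exact le_trans (le_trans (min_le_right _ _) (min_le_right _ _)) h
      · have h := hf (c5 0) (by decide)
        rw [show Ctwo.lev (c5 0) = (0,2) from rfl, fval02] at h
        exact (min_le_left _ _).trans h
    · intro hs
      rcases le_total t 1 with h1 | h1
      · rcases le_total t (2-t) with h2 | h2
        · refine ⟨![1,0,0,0,0], (ctwo_gen _).2 (Or.inl rfl), fun x hx => ?_⟩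
          have hx0 : x = c5 0 := (by decide : ∀ y : Fin 5, (![1,0,0,0,0] : Fin 5 → ZMod 2) y ≠ 0 → y = 0) x hx
          subst hx0
          rw [show Ctwo.lev (c5 0) = (0,2) from rfl, fval02]
          have : min t (min 1 (2-t)) = t := min_eq_left (le_min h1 h2)
          linarith [hs, this.symm.le]
        · -- 2-t ≤ t and t ≤ 1 implies 2-t ≤ 1, min = 2-t? min t (min 1 (2-t)): 2-t ≤ 1, 2-t ≤ t
          refine ⟨![0,0,1,0,0], (ctwo_gen _).2 (Or.inr (Or.inr (Or.inl rfl))), fun x hx => ?_⟩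
          have hx0 : x = c5 2 := (by decide : ∀ y : Fin 5, (![0,0,1,0,0] : Fin 5 → ZMod 2) y ≠ 0 → y = 2) x hx
          subst hx0
          rw [show Ctwo.lev (c5 2) = (2,0) from rfl, fval20]
          have ht : t = 1 := le_antisymm h1 (by linarith)
          rw [ht] at hs ⊢; norm_num at hs ⊢; linarith
      · rcases le_total 1 (2-t) with h2 | h2
        · refine ⟨![0,1,0,0,0], (ctwo_gen _).2 (Or.inr (Or.inl rfl)), fun x hx => ?_⟩
          have hx0 : x = c5 1 := (by decide : ∀ y : Fin 5, (![0,1,0,0,0] : Fin 5 → ZMod 2) y ≠ 0 → y = 1) x hx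
          subst hx0
          rw [show Ctwo.lev (c5 1) = (1,1) from rfl, fval11]
          have : min t (min 1 (2-t)) = 1 := by
            rw [min_eq_left h2, min_eq_right h1]
          linarith [hs, this.symm.le]
        · refine ⟨![0,0,1,0,0], (ctwo_gen _).2 (Or.inr (Or.inr (Or.inl rfl))), fun x hx => ?_⟩
          have hx0 : x = c5 2 := (by decide : ∀ y : Fin 5, (![0,0,1,0,0] : Fin 5 → ZMod 2) y ≠ 0 → y = 2) x hx
          subst hx0
          rw [show Ctwo.lev (c5 2) = (2,0) from rfl, fval20]
          have : min t (min 1 (2-t)) = 2-t := by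
            rw [min_eq_right h2, min_eq_right (by linarith : 2-t ≤ t)]
          linarith [hs, this.symm.le]
  unfold PreComplex.gamma
  rw [hset, csInf_Ici]
lemma cone_zminus : Cone.Zminus 1 = {![1,0,0]} := by
  ext z
  simp only [PreComplex.Zminus, PreComplex.ZminusAt, Set.mem_setOf_eq, Set.mem_singleton_iff]
  constructor
  · rintro ⟨δ₀, hδ₀, h⟩
    obtain ⟨hz, hf⟩ := h (min (δ₀/2) (1/2)) (by positivity) (by
      calc min (δ₀/2) (1/2) ≤ δ₀/2 := min_le_left _ _
      _ < δ₀ := by linarith)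
    set δ := min (δ₀/2) (1/2) with hδ
    have hδpos : 0 < δ := by positivity
    rcases (cone_gen z).1 hz with rfl | rfl
    · rfl
    · exfalso
      have h1 := hf (c3 1) (by decide)
      rw [show Cone.lev (c3 1) = (2,0) from rfl, fval20, cone_gamma] at h1
      have := min_le_left (1-δ) (2-(1-δ))
      linarith
  · rintro rfl
    refine ⟨1, one_pos, fun δ hδ hδ1 => ⟨(cone_gen _).2 (Or.inl rfl), fun x hx => ?_⟩⟩
    have hx0 : x = c3 0 := (by decide : ∀ y : Fin 3, (![1,0,0] : Fin 3 → ZMod 2) y ≠ 0 → y = 0) x hx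
    subst hx0
    rw [show Cone.lev (c3 0) = (0,2) from rfl, fval02, cone_gamma]
    exact le_min le_rfl (by linarith)

lemma cone_zplus : Cone.Zplus 1 = {![0,1,0]} := by
  ext z
  simp only [PreComplex.Zplus, PreComplex.ZplusAt, Set.mem_setOf_eq, Set.mem_singleton_iff]
  constructor
  · rintro ⟨δ₀, hδ₀, h⟩
    obtain ⟨hz, hf⟩ := h (min (δ₀/2) (1/2)) (by positivity) (by
      calc min (δ₀/2) (1/2) ≤ δ₀/2 := min_le_left _ _
      _ < δ₀ := by linarith)
    set δ := min (δ₀/2) (1/2) with hδ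
    have hδpos : 0 < δ := by positivity
    rcases (cone_gen z).1 hz with rfl | rfl
    · exfalso
      have h1 := hf (c3 0) (by decide)
      rw [show Cone.lev (c3 0) = (0,2) from rfl, fval02, cone_gamma] at h1
      have := min_le_right (1+δ) (2-(1+δ))
      linarith
    · rfl
  · rintro rfl
    refine ⟨1, one_pos, fun δ hδ hδ1 => ⟨(cone_gen _).2 (Or.inr rfl), fun x hx => ?_⟩⟩
    have hx0 : x = c3 1 := (by decide : ∀ y : Fin 3, (![0,1,0] : Fin 3 → ZMod 2) y ≠ 0 → y = 1) x hx
    subst hx0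
    rw [show Cone.lev (c3 1) = (2,0) from rfl, fval20, cone_gamma]
    exact le_min (by linarith) (by linarith)

lemma ctwo_zminus : Ctwo.Zminus 1 = {![1,0,0,0,0]} := by
  ext z
  simp only [PreComplex.Zminus, PreComplex.ZminusAt, Set.mem_setOf_eq, Set.mem_singleton_iff]
  constructor
  · rintro ⟨δ₀, hδ₀, h⟩
    obtain ⟨hz, hf⟩ := h (min (δ₀/2) (1/2)) (by positivity) (by
      calc min (δ₀/2) (1/2) ≤ δ₀/2 := min_le_left _ _
      _ < δ₀ := by linarith)
    set δ := min (δ₀/2) (1/2) with hδ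
    have hδpos : 0 < δ := by positivity
    have hγ : Ctwo.gamma (1-δ) ≤ 1-δ := by rw [ctwo_gamma]; exact min_le_left _ _
    rcases (ctwo_gen z).1 hz with rfl | rfl | rfl | rfl
    · rfl
    · exfalso
      have h1 := hf (c5 1) (by decide)
      rw [show Ctwo.lev (c5 1) = (1,1) from rfl, fval11] at h1
      linarith
    · exfalso
      have h1 := hf (c5 2) (by decide)
      rw [show Ctwo.lev (c5 2) = (2,0) from rfl, fval20] at h1
      linarith
    · exfalso
      have h1 := hf (c5 1) (by decide)
      rw [show Ctwo.lev (c5 1) = (1,1) from rfl, fval11] at h1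
      linarith
  · rintro rfl
    refine ⟨1, one_pos, fun δ hδ hδ1 => ⟨(ctwo_gen _).2 (Or.inl rfl), fun x hx => ?_⟩⟩
    have hx0 : x = c5 0 := (by decide : ∀ y : Fin 5, (![1,0,0,0,0] : Fin 5 → ZMod 2) y ≠ 0 → y = 0) x hx
    subst hx0
    rw [show Ctwo.lev (c5 0) = (0,2) from rfl, fval02, ctwo_gamma]
    exact le_min le_rfl (le_min (by linarith) (by linarith))

lemma ctwo_zplus : Ctwo.Zplus 1 = {![0,0,1,0,0]} := by
  ext z
  simp only [PreComplex.Zplus, PreComplex.ZplusAt, Set.mem_setOf_eq, Set.mem_singleton_iff]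
  constructor
  · rintro ⟨δ₀, hδ₀, h⟩
    obtain ⟨hz, hf⟩ := h (min (δ₀/2) (1/2)) (by positivity) (by
      calc min (δ₀/2) (1/2) ≤ δ₀/2 := min_le_left _ _
      _ < δ₀ := by linarith)
    set δ := min (δ₀/2) (1/2) with hδ
    have hδpos : 0 < δ := by positivity
    have hγ : Ctwo.gamma (1+δ) ≤ 1-δ := by
      rw [ctwo_gamma]
      exact le_trans (min_le_right _ _) (by rw [min_le_iff]; right; linarith)
    rcases (ctwo_gen z).1 hz with rfl | rfl | rfl | rfl
    · exfalso
      have h1 := hf (c5 0) (by decide)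
      rw [show Ctwo.lev (c5 0) = (0,2) from rfl, fval02] at h1
      linarith
    · exfalso
      have h1 := hf (c5 1) (by decide)
      rw [show Ctwo.lev (c5 1) = (1,1) from rfl, fval11] at h1
      linarith
    · rfl
    · exfalso
      have h1 := hf (c5 1) (by decide)
      rw [show Ctwo.lev (c5 1) = (1,1) from rfl, fval11] at h1
      linarith
  · rintro rfl
    refine ⟨1, one_pos, fun δ hδ hδ1 => ⟨(ctwo_gen _).2 (Or.inr (Or.inr (Or.inl rfl))), fun x hx => ?_⟩⟩
    have hx0 : x = c5 2 := (by decide : ∀ y : Fin 5, (![0,0,1,0,0] : Fin 5 → ZMod 2) y ≠ 0 → y = 2) x hx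
    subst hx0
    rw [show Ctwo.lev (c5 2) = (2,0) from rfl, fval20, ctwo_gamma]
    exact le_min (by linarith) (le_min (by linarith) (by linarith))
lemma cone_gamma_one : Cone.gamma 1 = 1 := by rw [cone_gamma]; norm_num

lemma ctwo_gamma_one : Ctwo.gamma 1 = 1 := by rw [ctwo_gamma]; norm_num

lemma cone_g2set (s : ℝ) : Cone.gamma2Set 1 s = Set.Ici 2 := by
  ext r
  simp only [PreComplex.gamma2Set, Set.mem_setOf_eq, Set.mem_Ici]
  constructor
  · rintro ⟨zm, hzm, zp, hzp, hm, hp, w, hw, hbw⟩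
    rw [cone_zminus] at hzm; rw [cone_zplus] at hzp
    replace hzm := Set.mem_singleton_iff.1 hzm; replace hzp := Set.mem_singleton_iff.1 hzp
    subst hzm; subst hzp
    have hw2 : w (c3 2) = 1 := by
      have key : ∀ v : Cone.Chain, Cone.bdry v = ![1,0,0] + ![0,1,0] → v (c3 2) = 1 := by
        unfold PreComplex.bdry Cone; decide
      exact key w hbw
    have hreg := hw (c3 2) (by rw [hw2]; decide)
    rcases hreg with h | h
    · exfalso
      rw [show Cone.lev (c3 2) = (2,2) from rfl, fval22, cone_gamma_one] at h
      linarith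
    · rw [show Cone.lev (c3 2) = (2,2) from rfl, fval22] at h
      exact h
  · intro hr
    refine ⟨![1,0,0], by rw [cone_zminus]; rfl, ![0,1,0], by rw [cone_zplus]; rfl,
      fun x hx => ?_, fun x hx => ?_, ![0,0,1], fun x hx => ?_, ?_⟩
    · have hx0 : x = c3 0 := (by decide : ∀ y : Fin 3, (![1,0,0] : Fin 3 → ZMod 2) y ≠ 0 → y = 0) x hx
      subst hx0
      left
      rw [show Cone.lev (c3 0) = (0,2) from rfl, fval02, cone_gamma_one]
    · have hx0 : x = c3 1 := (by decide : ∀ y : Fin 3, (![0,1,0] : Fin 3 → ZMod 2) y ≠ 0 → y = 1) x hx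
      subst hx0
      left
      rw [show Cone.lev (c3 1) = (2,0) from rfl, fval20, cone_gamma_one]
      norm_num
    · have hx0 : x = c3 2 := (by decide : ∀ y : Fin 3, (![0,0,1] : Fin 3 → ZMod 2) y ≠ 0 → y = 2) x hx
      subst hx0
      right
      rw [show Cone.lev (c3 2) = (2,2) from rfl, fval22]
      exact hr
    · show Cone.bdry ![0,0,1] = ![1,0,0] + ![0,1,0]
      unfold PreComplex.bdry Cone; decide

lemma ctwo_g2set (s : ℝ) : Ctwo.gamma2Set 1 s = Set.Ici (max (1+s/2) (2-s/2)) := by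
  ext r
  simp only [PreComplex.gamma2Set, Set.mem_setOf_eq, Set.mem_Ici]
  constructor
  · rintro ⟨zm, hzm, zp, hzp, hm, hp, w, hw, hbw⟩
    rw [ctwo_zminus] at hzm; rw [ctwo_zplus] at hzp
    replace hzm := Set.mem_singleton_iff.1 hzm; replace hzp := Set.mem_singleton_iff.1 hzp
    subst hzm; subst hzp
    have hw34 : w (c5 3) = 1 ∧ w (c5 4) = 1 := by
      have key : ∀ v : Ctwo.Chain, Ctwo.bdry v = ![1,0,0,0,0] + ![0,0,1,0,0] →
          v (c5 3) = 1 ∧ v (c5 4) = 1 := by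
        unfold PreComplex.bdry Ctwo; decide
      exact key w hbw
    have h3 := hw (c5 3) (by rw [hw34.1]; decide)
    have h4 := hw (c5 4) (by rw [hw34.2]; decide)
    rw [max_le_iff]
    constructor
    · rcases h3 with h | h
      · exfalso
        rw [show Ctwo.lev (c5 3) = (1,2) from rfl, fval12, ctwo_gamma_one] at h
        linarith
      · rw [show Ctwo.lev (c5 3) = (1,2) from rfl, fval12] at h
        exact h
    · rcases h4 with h | h
      · exfalso
        rw [show Ctwo.lev (c5 4) = (2,1) from rfl, fval21, ctwo_gamma_one] at h
        linarith
      · rw [show Ctwo.lev (c5 4) = (2,1) from rfl, fval21] at h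
        exact h
  · intro hr
    rw [max_le_iff] at hr
    refine ⟨![1,0,0,0,0], by rw [ctwo_zminus]; rfl, ![0,0,1,0,0], by rw [ctwo_zplus]; rfl,
      fun x hx => ?_, fun x hx => ?_, ![0,0,0,1,1], fun x hx => ?_, ?_⟩
    · have hx0 : x = c5 0 := (by decide : ∀ y : Fin 5, (![1,0,0,0,0] : Fin 5 → ZMod 2) y ≠ 0 → y = 0) x hx
      subst hx0
      left
      rw [show Ctwo.lev (c5 0) = (0,2) from rfl, fval02, ctwo_gamma_one]
    · have hx0 : x = c5 2 := (by decide : ∀ y : Fin 5, (![0,0,1,0,0] : Fin 5 → ZMod 2) y ≠ 0 → y = 2) x hx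
      subst hx0
      left
      rw [show Ctwo.lev (c5 2) = (2,0) from rfl, fval20, ctwo_gamma_one]
      norm_num
    · have hx0 : x = c5 3 ∨ x = c5 4 :=
        (by decide : ∀ y : Fin 5, (![0,0,0,1,1] : Fin 5 → ZMod 2) y ≠ 0 → y = 3 ∨ y = 4) x hx
      rcases hx0 with rfl | rfl
      · right
        rw [show Ctwo.lev (c5 3) = (1,2) from rfl, fval12]
        exact hr.1
      · right
        rw [show Ctwo.lev (c5 4) = (2,1) from rfl, fval21]
        exact hr.2
    · show Ctwo.bdry ![0,0,0,1,1] = ![1,0,0,0,0] + ![0,0,1,0,0]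
      unfold PreComplex.bdry Ctwo; decide
lemma sInf_coe_Ici (m : ℝ) : sInf ((fun r : ℝ => (r : EReal)) '' Set.Ici m) = (m : EReal) := by
  apply le_antisymm
  · exact sInf_le ⟨m, le_refl m, rfl⟩
  · apply le_sInf; rintro x ⟨r, hr, rfl⟩; exact EReal.coe_le_coe_iff.2 hr

lemma ereal_calc (a b : ℝ) : (-2 : EReal) * ((a : EReal) - (b : EReal)) = ((-2*(a-b) : ℝ) : EReal) := by
  rw [← EReal.coe_sub, show (-2 : EReal) = ((-2 : ℝ) : EReal) from rfl, ← EReal.coe_mul]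

lemma cone_ups2 (s : ℝ) : Cone.Upsilon2 1 s = ((-2 : ℝ) : EReal) := by
  unfold PreComplex.Upsilon2 PreComplex.gamma2
  rw [cone_g2set, sInf_coe_Ici, cone_gamma_one, ereal_calc]
  norm_num

lemma ctwo_ups2 (s : ℝ) : Ctwo.Upsilon2 1 s = ((-2*(max (1+s/2) (2-s/2) - 1) : ℝ) : EReal) := by
  unfold PreComplex.Upsilon2 PreComplex.gamma2
  rw [ctwo_g2set, sInf_coe_Ici, ctwo_gamma_one, ereal_calc]
/-- `Υ²_{C₁,1}(s) = −2` for all `s ∈ [0,2]`, while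
`Υ²_{C₂,1}(s) = −2 + s` on `[0,1]` and `= −s` on `[1,2]`; in particular
`Υ_{C₁} = Υ_{C₂}` but `Υ²_{C₁,1} ≠ Υ²_{C₂,1}`. -/
theorem upsilon2_Cone_Ctwo :
    (∀ s ∈ Set.Icc (0 : ℝ) 2, Cone.Upsilon2 1 s = ((-2 : ℝ) : EReal)) ∧
    (∀ s ∈ Set.Icc (0 : ℝ) 1, Ctwo.Upsilon2 1 s = ((-2 + s : ℝ) : EReal)) ∧
    (∀ s ∈ Set.Icc (1 : ℝ) 2, Ctwo.Upsilon2 1 s = ((-s : ℝ) : EReal)) ∧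
    (∀ t ∈ Set.Icc (0 : ℝ) 2, Cone.Upsilon t = Ctwo.Upsilon t) ∧
    (fun s : ℝ => Cone.Upsilon2 1 s) ≠ (fun s : ℝ => Ctwo.Upsilon2 1 s) := by
  refine ⟨fun s _ => cone_ups2 s, fun s hs => ?_, fun s hs => ?_, fun t ht => ?_, ?_⟩
  · rw [ctwo_ups2]
    have hmax : max (1+s/2) (2-s/2) = 2-s/2 := max_eq_right (by linarith [hs.2])
    exact congrArg _ (by rw [hmax]; ring)
  · rw [ctwo_ups2]
    have hmax : max (1+s/2) (2-s/2) = 1+s/2 := max_eq_left (by linarith [hs.1])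
    exact congrArg _ (by rw [hmax]; ring)
  · unfold PreComplex.Upsilon
    rw [cone_gamma, ctwo_gamma]
    have : min t (2-t) = min t (min 1 (2-t)) := by
      rcases le_total t (2-t) with h | h
      · rw [min_eq_left h, min_eq_left (le_min (by linarith [ht.2]) h)]
      · rw [min_eq_right h, min_eq_right (by linarith : 2-t ≤ 1), min_eq_right h]
    rw [this]
  · intro h
    have h1 := congrFun h 1
    rw [cone_ups2, ctwo_ups2] at h1
    have h2 : (-2 : ℝ) = -2*(max (1+(1:ℝ)/2) (2-(1:ℝ)/2) - 1) := EReal.coe_eq_coe_iff.1 h1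
    norm_num at h2
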